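/- Let n be a positive natural number, let U be an n×n complex unitary matrix, and let σ be a subset of the index set {1,…,n}. Then the principal minor of U indexed by σ and the complementary principal minor of U indexed by the complement of σ have equal magnitude: |det U_{σσ}| = |det U_{σᶜσᶜ}|. -/

import Mathlib

open Matrix

lemma aux_abs_det_blocks {α β : Type*} [Fintype α] [Fintype β] [DecidableEq α] [DecidableEq β]
    (V : Matrix (α ⊕ β) (α ⊕ β) ℂ) (hV : Vᴴ * V = 1) :
    ‖(V.toBlocks₁₁).det‖ = ‖(V.toBlocks₂₂).det‖ := by
  set A := V.toBlocks₁₁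
  set B := V.toBlocks₁₂
  set C := V.toBlocks₂₁
  set D := V.toBlocks₂₂
  have hVV : V * Vᴴ = 1 := mul_eq_one_comm.mp hV
  have hVblocks : V = fromBlocks A B C D := (fromBlocks_toBlocks V).symm
  have hVH : Vᴴ = fromBlocks Aᴴ Cᴴ Bᴴ Dᴴ := by
    rw [hVblocks, fromBlocks_conjTranspose]
  have hmul : fromBlocks (A * Aᴴ + B * Bᴴ) (A * Cᴴ + B * Dᴴ)
      (C * Aᴴ + D * Bᴴ) (C * Cᴴ + D * Dᴴ) = (1 : Matrix (α ⊕ β) (α ⊕ β) ℂ) := by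
    rw [← fromBlocks_multiply, ← hVblocks, ← hVH, hVV]
  rw [← fromBlocks_one] at hmul
  have h11 : A * Aᴴ + B * Bᴴ = 1 := by
    have := congrArg Matrix.toBlocks₁₁ hmul
    rwa [toBlocks_fromBlocks₁₁, toBlocks_fromBlocks₁₁] at this
  have h21 : C * Aᴴ + D * Bᴴ = 0 := by
    have := congrArg Matrix.toBlocks₂₁ hmul
    rwa [toBlocks_fromBlocks₂₁, toBlocks_fromBlocks₂₁] at this
  have key : V * fromBlocks Aᴴ 0 Bᴴ 1 = fromBlocks 1 B 0 D := by
    rw [hVblocks, fromBlocks_multiply]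
    rw [h11, h21]
    simp
  have hdet : V.det * star A.det = D.det := by
    have := congrArg Matrix.det key
    rw [Matrix.det_mul, det_fromBlocks_zero₁₂, det_fromBlocks_zero₂₁] at this
    simpa [Matrix.det_conjTranspose] using this
  have habsV : ‖V.det‖ = 1 := by
    have h1 : star V.det * V.det = 1 := by
      have := congrArg Matrix.det hV
      simpa [Matrix.det_mul, Matrix.det_conjTranspose] using this
    have := congrArg norm h1
    rw [norm_mul] at this
    rw [show (star V.det = (starRingEnd ℂ) V.det) from rfl, Complex.norm_conj] at this
    rw [norm_one] at this
    nlinarith [norm_nonneg V.det, this]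
  calc ‖A.det‖ = ‖V.det‖ * ‖star A.det‖ := by
        rw [habsV, show (star A.det = (starRingEnd ℂ) A.det) from rfl, Complex.norm_conj, one_mul]
    _ = ‖D.det‖ := by rw [← norm_mul, hdet]

/-- The principal minor of a matrix `M` indexed by a subset `σ` of the indices:
the determinant of the submatrix keeping rows and columns in `σ`.
By convention, the minor indexed by the empty set is `1` (determinant of the empty matrix). -/
noncomputable def principalMinor {n : ℕ} (M : Matrix (Fin n) (Fin n) ℂ)
    (σ : Finset (Fin n)) : ℂ :=
  (M.submatrix (fun i : σ => (i : Fin n)) (fun i : σ => (i : Fin n))).det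

/-- Complementary principal minors of a unitary matrix have equal magnitude. -/
theorem abs_principalMinor_eq_abs_compl {n : ℕ} (hn : 0 < n)
    (U : Matrix (Fin n) (Fin n) ℂ) (hU : Uᴴ * U = 1) (σ : Finset (Fin n)) :
    ‖principalMinor U σ‖ = ‖principalMinor U σᶜ‖ := by
  classical
  let e : {x : Fin n // x ∈ σ} ⊕ {x : Fin n // x ∉ σ} ≃ Fin n :=
    Equiv.sumCompl (· ∈ σ)
  set V : Matrix _ _ ℂ := U.submatrix e e with hVdef
  have hVu : Vᴴ * V = 1 := by
    rw [hVdef, conjTranspose_submatrix, submatrix_mul_equiv, hU, submatrix_one_equiv]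
  have hblocks := aux_abs_det_blocks V hVu
  have h1 : principalMinor U σ = (V.toBlocks₁₁).det := by
    congr 1
  have h2 : principalMinor U σᶜ = (V.toBlocks₂₂).det := by
    unfold principalMinor
    let eσ : {x : Fin n // x ∈ σᶜ} ≃ {x : Fin n // x ∉ σ} :=
      Equiv.subtypeEquivRight (fun x => Finset.mem_compl)
    rw [show (U.submatrix (fun i : (σᶜ : Finset (Fin n)) => (i : Fin n))
        (fun i : (σᶜ : Finset (Fin n)) => (i : Fin n)))
        = (V.toBlocks₂₂).submatrix eσ eσ from rfl]
    rw [det_submatrix_equiv_self]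
  rw [h1, h2, hblocks]
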